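/- Let n ≥ 2 and consider the vectors of ℤⁿ: v_i = −e_{i−1} + 2e_i − e_{i+1} for 1 ≤ i ≤ n−2 (with e_0 = 0), v_{n−1} = −e_{n−2} + 2e_{n−1} − 2e_n, and v_n = −e_{n−1} + 2e_n. Then the subgroup of ℤⁿ generated by v_1, …, v_n is exactly {(a_1, …, a_n) ∈ ℤⁿ : a_n is even}. -/

import Mathlib

/-- The standard basis vectors `e_1, …, e_n` of `ℤⁿ` (indexed `1`-based), with the
convention that `e_j = 0` for `j` outside `{1, …, n}` (in particular `e_0 = e_{n+1} = 0`). -/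
def stdE (n j : ℕ) : Fin n → ℤ :=
  if h : 1 ≤ j ∧ j ≤ n then Pi.single (⟨j - 1, by omega⟩ : Fin n) 1 else 0

/-- Type `C_n` vectors: `v_i = -e_{i-1} + 2e_i - e_{i+1}` for `1 ≤ i ≤ n-2`,
`v_{n-1} = -e_{n-2} + 2e_{n-1} - 2e_n`, and `v_n = -e_{n-1} + 2e_n`. -/
def vC (n i : ℕ) : Fin n → ℤ :=
  if i = n - 1 then -(stdE n (n - 2)) + 2 • stdE n (n - 1) - 2 • stdE n n
  else -(stdE n (i - 1)) + 2 • stdE n i - stdE n (i + 1)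

lemma stdE_zero {n k : ℕ} (h : ¬(1 ≤ k ∧ k ≤ n)) : stdE n k = 0 := by
  rw [stdE, dif_neg h]

lemma stdE_last {n : ℕ} (hn : 2 ≤ n) {k : ℕ} (hk : k ≠ n) :
    stdE n k ⟨n - 1, Nat.sub_lt (Nat.lt_of_lt_of_le Nat.two_pos hn) Nat.one_pos⟩ = 0 := by
  rw [stdE]
  split
  · rename_i h
    rw [Pi.single_apply, if_neg]
    simp only [Fin.mk.injEq]
    omega
  · rfl

lemma zsmul_apply'' {n : ℕ} (m : ℤ) (f : Fin n → ℤ) (j : Fin n) : (m • f) j = m * f j := rfl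

lemma stdE_single {n : ℕ} (i : Fin n) : stdE n (i.val + 1) = Pi.single i 1 := by
  have hi := i.isLt
  rw [stdE, dif_pos ⟨by omega, by omega⟩]
  exact congrArg (fun j => Pi.single j (1 : ℤ)) (Fin.ext (by simp))

section aux

variable {n : ℕ} (hn : 2 ≤ n)

local notation "G" => AddSubgroup.closure (vC n '' Set.Icc 1 n)

lemma mem_gen {i : ℕ} (h1 : 1 ≤ i) (h2 : i ≤ n) : vC n i ∈ G :=
  AddSubgroup.subset_closure ⟨i, ⟨h1, h2⟩, rfl⟩

include hn

lemma sumA : ∀ k, k ≤ n - 2 → stdE n k + stdE n 1 - stdE n (k + 1) ∈ G := by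
  intro k
  induction k with
  | zero =>
    intro _
    have h0 : stdE n 0 = 0 := stdE_zero (by omega)
    rw [h0]
    simpa using zero_mem _
  | succ k ih =>
    intro hk
    have hs := ih (by omega)
    have hv := mem_gen (n := n) (i := k + 1) (by omega) (by omega)
    rw [vC, if_neg (by omega)] at hv
    simp only [Nat.add_sub_cancel] at hv
    have e2 : k + 1 + 1 = k + 2 := by omega
    rw [e2] at hv ⊢
    have key : stdE n (k + 1) + stdE n 1 - stdE n (k + 2)
        = (stdE n k + stdE n 1 - stdE n (k + 1))
          + (-(stdE n k) + 2 • stdE n (k + 1) - stdE n (k + 2)) := by abel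
    rw [key]
    exact add_mem hs hv

lemma sumB : stdE n 1 + stdE n (n - 1) - 2 • stdE n n ∈ G := by
  have hs := sumA hn (n - 2) le_rfl
  have e1 : n - 2 + 1 = n - 1 := by omega
  rw [e1] at hs
  have hv := mem_gen (n := n) (i := n - 1) (by omega) (by omega)
  rw [vC, if_pos rfl] at hv
  have key : stdE n 1 + stdE n (n - 1) - 2 • stdE n n
      = (stdE n (n - 2) + stdE n 1 - stdE n (n - 1))
        + (-(stdE n (n - 2)) + 2 • stdE n (n - 1) - 2 • stdE n n) := by abel
  rw [key]
  exact add_mem hs hv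

lemma e1_mem : stdE n 1 ∈ G := by
  have hs := sumB hn
  have hv := mem_gen (n := n) (i := n) (by omega) le_rfl
  rw [vC, if_neg (by omega), stdE_zero (k := n + 1) (by omega)] at hv
  have key : stdE n 1
      = (stdE n 1 + stdE n (n - 1) - 2 • stdE n n)
        + (-(stdE n (n - 1)) + 2 • stdE n n - 0) := by abel
  rw [key]
  exact add_mem hs hv

lemma ek_mem : ∀ k, 1 ≤ k → k ≤ n - 1 → stdE n k ∈ G := by
  intro k
  induction k with
  | zero => omega
  | succ k ih =>
    intro _ hk
    rcases Nat.eq_zero_or_pos k with h0 | h0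
    · subst h0; exact e1_mem hn
    · have hs := sumA hn k (by omega)
      have hek := ih h0 (by omega)
      have key : stdE n (k + 1)
          = stdE n k + stdE n 1 - (stdE n k + stdE n 1 - stdE n (k + 1)) := by abel
      rw [key]
      exact sub_mem (add_mem hek (e1_mem hn)) hs

lemma twoEn_mem : 2 • stdE n n ∈ G := by
  have hs := sumB hn
  have h1 := e1_mem hn
  have h2 := ek_mem hn (n - 1) (by omega) le_rfl
  have key : 2 • stdE n n
      = stdE n 1 + stdE n (n - 1) - (stdE n 1 + stdE n (n - 1) - 2 • stdE n n) := by abel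
  rw [key]
  exact sub_mem (add_mem h1 h2) hs

end aux

theorem stmt_14 (n : ℕ) (hn : 2 ≤ n) :
    ∀ a : Fin n → ℤ,
      a ∈ AddSubgroup.closure (vC n '' Set.Icc 1 n) ↔
        (2 : ℤ) ∣ a ⟨n - 1, by omega⟩ := by
  intro a
  constructor
  · intro ha
    let S : AddSubgroup (Fin n → ℤ) :=
      { carrier := {b | (2 : ℤ) ∣ b ⟨n - 1, by omega⟩}
        zero_mem' := ⟨0, by simp⟩
        add_mem' := fun hx hy => dvd_add hx hy
        neg_mem' := fun hx => dvd_neg.mpr hx }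
    have hle : AddSubgroup.closure (vC n '' Set.Icc 1 n) ≤ S := by
      rw [AddSubgroup.closure_le]
      rintro _ ⟨i, ⟨hi1, hi2⟩, rfl⟩
      show (2 : ℤ) ∣ vC n i ⟨n - 1, by omega⟩
      rw [vC]
      by_cases hin : i = n - 1
      · rw [if_pos hin]
        have h1 := stdE_last hn (k := n - 2) (by omega)
        have h2 := stdE_last hn (k := n - 1) (by omega)
        simp only [two_nsmul, Pi.sub_apply, Pi.add_apply, Pi.neg_apply, h1, h2]
        omega
      · rw [if_neg hin]
        have h1 := stdE_last hn (k := i - 1) (by omega)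
        have h2 := stdE_last hn (k := i + 1) (by omega)
        simp only [two_nsmul, Pi.sub_apply, Pi.add_apply, Pi.neg_apply, h1, h2]
        omega
    exact hle ha
  · rintro ⟨m, hm⟩
    have ha : a = ∑ i : Fin n, Pi.single i (a i) := (Finset.univ_sum_single a).symm
    rw [ha]
    apply sum_mem
    intro i _
    by_cases hi : i.val = n - 1
    · have hii : i = ⟨n - 1, by omega⟩ := Fin.ext hi
      have hstd : stdE n n = Pi.single i (1 : ℤ) := by
        have : stdE n (i.val + 1) = Pi.single i 1 := stdE_single i
        rwa [show i.val + 1 = n by omega] at this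
      have hkey : Pi.single i (a i) = m • (2 • stdE n n) := by
        rw [hstd, two_nsmul]
        funext j
        rw [zsmul_apply'', Pi.add_apply, Pi.single_apply, Pi.single_apply]
        by_cases hji : j = i
        · rw [if_pos hji, if_pos hji, hji, hii, hm]; ring
        · rw [if_neg hji, if_neg hji]; ring
      rw [hkey]
      exact AddSubgroup.zsmul_mem _ (twoEn_mem hn) m
    · have hmem : stdE n (i.val + 1) ∈ AddSubgroup.closure (vC n '' Set.Icc 1 n) := by
        have := i.isLt
        exact ek_mem hn (i.val + 1) (by omega) (by omega)
      have hkey : Pi.single i (a i) = (a i) • stdE n (i.val + 1) := by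
        rw [stdE_single i]
        funext j
        rw [zsmul_apply'', Pi.single_apply, Pi.single_apply]
        by_cases hji : j = i
        · rw [if_pos hji, if_pos hji]; ring
        · rw [if_neg hji, if_neg hji]; ring
      rw [hkey]
      exact AddSubgroup.zsmul_mem _ hmem (a i)
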